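/- Let G be a group and g, h elements of G. Then for every positive integer n, the element g^n h^n lies in <<g h>>^+. -/

import Mathlib

/-- The set of conjugates `h⁻¹ * g * h` of an element `g` of a group. -/
def conjSet {G : Type*} [Group G] (g : G) : Set G := {x | ∃ h : G, x = h⁻¹ * g * h}

/-- `<<g>>^+`: the subsemigroup generated by all conjugates of `g`, i.e. the set of
nonempty finite products of conjugates of `g`. -/
def ggP {G : Type*} [Group G] (g : G) : Subsemigroup G := Subsemigroup.closure (conjSet g)

lemma conj_mem_ggP {G : Type*} [Group G] (a c x : G) (hx : x ∈ ggP a) :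
    c⁻¹ * x * c ∈ ggP a := by
  induction hx using Subsemigroup.closure_induction with
  | mem y hy =>
    obtain ⟨k, rfl⟩ := hy
    exact Subsemigroup.subset_closure ⟨k * c, by group⟩
  | mul y z _ _ hy hz =>
    have : c⁻¹ * (y * z) * c = (c⁻¹ * y * c) * (c⁻¹ * z * c) := by group
    rw [this]
    exact mul_mem hy hz

theorem pow_mul_pow_mem_ggP_mul {G : Type*} [Group G] (g h : G) :
    ∀ n : ℕ, 0 < n → g ^ n * h ^ n ∈ ggP (g * h) := by
  intro n hn
  induction n with
  | zero => omega
  | succ n ih =>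
    rcases Nat.eq_zero_or_pos n with rfl | hpos
    · have h0 : g * h ∈ ggP (g * h) := Subsemigroup.subset_closure (s := conjSet (g*h)) ⟨1, by group⟩
      simpa using h0
    · have h1 := conj_mem_ggP (g * h) g⁻¹ _ (ih hpos)
      have h2 : g * h ∈ ggP (g * h) := Subsemigroup.subset_closure ⟨1, by group⟩
      have := mul_mem h1 h2
      have heq : g⁻¹⁻¹ * (g ^ n * h ^ n) * g⁻¹ * (g * h) = g ^ (n + 1) * h ^ (n + 1) := by
        rw [pow_succ, pow_succ']
        group
      rwa [heq] at this
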